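/- For every integer n ≥ 1 there exists a constant C_n = C(β,n) such that for all z ≥ 0 and all v with v ≢ ±π (mod 2βπ): |z^{n−1} · (dⁿ/dzⁿ)(e^z · E(z,v))| ≤ C_n. Moreover there exists a constant C = C(β) such that |e^z · E(z,v)| ≤ C for all such z and v. -/

import Mathlib

open Real MeasureTheory

/-- The function `E(z,v)` appearing in Carslaw's representation of the conical heat kernel. -/
noncomputable def Efun (β z v : ℝ) : ℝ :=
  ∫ y in Set.Ioi (0 : ℝ),
    Real.exp (-z * Real.cosh y) *
      (2 * Real.sin (π / β) * (Real.cos (π / β) - Real.cos (v / β) * Real.cosh (y / β))) /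
      ((Real.cosh (y / β) - Real.cos ((v - π) / β)) *
        (Real.cosh (y / β) - Real.cos ((v + π) / β)))

section EfunAux
open Set Filter Metric Topology

noncomputable def Fk (β v y : ℝ) : ℝ :=
  (2 * Real.sin (π / β) * (Real.cos (π / β) - Real.cos (v / β) * Real.cosh (y / β))) /
    ((Real.cosh (y / β) - Real.cos ((v - π) / β)) *
      (Real.cosh (y / β) - Real.cos ((v + π) / β)))

noncomputable def ck (y : ℝ) : ℝ := Real.cosh y - 1

noncomputable def Hy (β s y : ℝ) : ℝ := 4 * s * β ^ 2 / (4 * s ^ 2 * β ^ 2 + y ^ 2)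

lemma ck_eq (y : ℝ) : ck y = 2 * Real.sinh (y / 2) ^ 2 := by
  have h : y = 2 * (y / 2) := by ring
  rw [ck, h, Real.cosh_two_mul, Real.cosh_sq]
  ring

lemma ck_nonneg (y : ℝ) : 0 ≤ ck y := by
  rw [ck, sub_nonneg]; exact Real.one_le_cosh y

lemma sq_half_le_ck {y : ℝ} (hy : 0 ≤ y) : y ^ 2 / 2 ≤ ck y := by
  rw [ck_eq]
  have h1 : y / 2 ≤ Real.sinh (y / 2) := Real.self_le_sinh_iff.2 (by linarith)
  nlinarith [h1]

lemma sinh_le_mul_exp {u : ℝ} (hu : 0 ≤ u) : Real.sinh u ≤ u * Real.exp u := by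
  rw [Real.sinh_eq]
  have h1 : 1 - 2 * u ≤ Real.exp (-(2 * u)) := by
    have := Real.add_one_le_exp (-(2 * u)); linarith
  have h2 : Real.exp (-u) = Real.exp u * Real.exp (-(2*u)) := by
    rw [← Real.exp_add]; ring_nf
  have h3 : (0:ℝ) < Real.exp u := Real.exp_pos u
  rw [h2]
  nlinarith [h1, h3]

lemma exp_half_le_sinh {u : ℝ} (hu : (1:ℝ)/2 ≤ u) : Real.exp u / 6 ≤ Real.sinh u := by
  rw [Real.sinh_eq]
  have h0 : (0:ℝ) < Real.exp u := Real.exp_pos u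
  have h1 : Real.exp (-u) ≤ Real.exp u * (2/3) := by
    have : Real.exp (-u) * Real.exp 1 ≤ Real.exp u * Real.exp (1/2) := by
      rw [← Real.exp_add, ← Real.exp_add]
      apply Real.exp_le_exp.2; linarith
    have he : (9:ℝ)/4 ≤ Real.exp 1 := by
      have := Real.exp_one_gt_d9; linarith
    have he2 : Real.exp (1/2) ^ 2 = Real.exp 1 := by
      rw [← Real.exp_nat_mul]; norm_num
    -- exp(1/2) ≤ (2/3) exp(1) /? we need exp(1/2) * (3/2) ≤ exp 1
    have hh : Real.exp (1/2) * (3/2) ≤ Real.exp 1 := by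
      nlinarith [Real.exp_pos (1/2), he, he2]
    have hp : (0:ℝ) < Real.exp (-u) := Real.exp_pos _
    nlinarith [this, hh, Real.exp_pos (1/2), Real.exp_pos 1]
  linarith

lemma Hy_nonneg {β s : ℝ} (hβ : 0 < β) (hs : 0 ≤ s) (y : ℝ) (hy : y ∈ Ioi (0:ℝ)) :
    0 ≤ Hy β s y := by
  have hy' : (0:ℝ) < y := hy
  have : (0:ℝ) < 4 * s ^ 2 * β ^ 2 + y ^ 2 := by nlinarith [pow_pos hy' 2]
  unfold Hy
  apply div_nonneg (by positivity) this.le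

lemma Hy_integrable {β s : ℝ} (hβ : 0 < β) (hs : 0 ≤ s) :
    IntegrableOn (Hy β s) (Ioi (0:ℝ)) ∧ ∫ y in Ioi (0:ℝ), Hy β s y ≤ β * π := by
  rcases eq_or_lt_of_le hs with rfl | hs
  · constructor
    · have : Hy β 0 = fun _ : ℝ => (0:ℝ) := by
        funext y; unfold Hy; simp
      rw [this]; exact integrableOn_zero
    · have : ∀ y ∈ Ioi (0:ℝ), Hy β 0 y = 0 := by intro y _; unfold Hy; simp
      rw [setIntegral_congr_fun measurableSet_Ioi this]
      simp; positivity
  · -- antiderivative 2β arctan (y/(2 s β))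
    set g : ℝ → ℝ := fun y => 2 * β * Real.arctan (y / (2 * s * β)) with hg
    have hsb : (0:ℝ) < 2 * s * β := by positivity
    have hderiv : ∀ y ∈ Ioi (0:ℝ), HasDerivAt g (Hy β s y) y := by
      intro y _
      have h1 : HasDerivAt (fun y : ℝ => y / (2 * s * β)) (1 / (2 * s * β)) y := by
        simpa using (hasDerivAt_id y).div_const (2 * s * β)
      have h2 := (h1.arctan).const_mul (2 * β)
      refine h2.congr_deriv ?_
      unfold Hy
      have hne : 4 * s ^ 2 * β ^ 2 + y ^ 2 ≠ 0 := by positivity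
      field_simp
      ring
    have hcont : ContinuousWithinAt g (Ici (0:ℝ)) 0 := by
      apply Continuous.continuousWithinAt
      exact continuous_const.mul (Real.continuous_arctan.comp (continuous_id.div_const _))
    have htend : Tendsto g atTop (𝓝 (2 * β * (π / 2))) := by
      apply Tendsto.const_mul
      apply (Real.tendsto_arctan_atTop.mono_right nhdsWithin_le_nhds).comp
      exact Tendsto.atTop_div_const hsb tendsto_id
    have hpos : ∀ y ∈ Ioi (0:ℝ), 0 ≤ Hy β s y := Hy_nonneg hβ hs.le
    constructor
    · exact integrableOn_Ioi_deriv_of_nonneg hcont hderiv hpos htend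
    · have := integral_Ioi_of_hasDerivAt_of_nonneg hcont hderiv hpos htend
      rw [this]
      have : g 0 = 0 := by simp [hg]
      rw [this]
      nlinarith [Real.pi_pos]

lemma Fk_eq {β v y : ℝ} (hβ0 : 0 < β) (hy : 0 < y) :
    Fk β v y = -(Real.sin ((π - v)/β) / (Real.cosh (y/β) - Real.cos ((π - v)/β))
      + Real.sin ((π + v)/β) / (Real.cosh (y/β) - Real.cos ((π + v)/β))) := by
  have hC : 1 < Real.cosh (y/β) := Real.one_lt_cosh.2 (by positivity)
  have hd1 : 0 < Real.cosh (y/β) - Real.cos ((π - v)/β) := by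
    have := Real.cos_le_one ((π - v)/β); linarith
  have hd2 : 0 < Real.cosh (y/β) - Real.cos ((π + v)/β) := by
    have := Real.cos_le_one ((π + v)/β); linarith
  have e1 : (v - π)/β = -((π - v)/β) := by ring
  rw [Fk, e1, Real.cos_neg]
  have key : 2 * Real.sin (π/β) * (Real.cos (π/β) - Real.cos (v/β) * Real.cosh (y/β))
      = -(Real.sin ((π - v)/β) * (Real.cosh (y/β) - Real.cos ((π + v)/β))
        + Real.sin ((π + v)/β) * (Real.cosh (y/β) - Real.cos ((π - v)/β))) := by
    rw [sub_div, add_div, Real.sin_sub, Real.cos_sub, Real.sin_add, Real.cos_add]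
    linear_combination (-2 * Real.sin (π/β) * Real.cos (π/β)) * (Real.sin_sq_add_cos_sq (v/β))
  have e2 : (v + π)/β = (π + v)/β := by ring
  rw [e2, key, div_add_div _ _ hd1.ne' hd2.ne', ← neg_div]
  ring

lemma sin_div_le {β y : ℝ} (θ : ℝ) (hβ0 : 0 < β) (hy : 0 < y) :
    |Real.sin θ| / (Real.cosh (y/β) - Real.cos θ) ≤ Hy β |Real.sin (θ/2)| y := by
  have hC : 1 < Real.cosh (y/β) := Real.one_lt_cosh.2 (by positivity)
  have hden : 0 < Real.cosh (y/β) - Real.cos θ := by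
    have := Real.cos_le_one θ; linarith
  set σ := |Real.sin (θ/2)| with hσ
  have hσ0 : 0 ≤ σ := abs_nonneg _
  have hsin : |Real.sin θ| ≤ 2 * σ := by
    have h : Real.sin θ = 2 * Real.sin (θ/2) * Real.cos (θ/2) := by
      have h2 : θ = 2 * (θ/2) := by ring
      nth_rewrite 1 [h2]
      exact Real.sin_two_mul (θ/2)
    rw [h, abs_mul, abs_mul, abs_two]
    have h3 : |Real.cos (θ/2)| ≤ 1 := Real.abs_cos_le_one (θ/2)
    nlinarith
  have hcos : Real.cos θ = 1 - 2 * Real.sin (θ/2) ^ 2 := by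
    have h2 : θ = 2 * (θ/2) := by ring
    nth_rewrite 1 [h2]
    rw [Real.cos_two_mul']
    nlinarith [Real.sin_sq_add_cos_sq (θ/2)]
  have hck : y^2/(2*β^2) ≤ Real.cosh (y/β) - 1 := by
    have := sq_half_le_ck (y := y/β) (by positivity)
    rw [ck] at this
    calc y^2/(2*β^2) = (y/β)^2/2 := by field_simp
    _ ≤ _ := this
  have hD' : (0:ℝ) < y^2/(2*β^2) + 2*σ^2 := by positivity
  have hDle : y^2/(2*β^2) + 2*σ^2 ≤ Real.cosh (y/β) - Real.cos θ := by
    rw [hcos]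
    have : σ^2 = Real.sin (θ/2)^2 := sq_abs _
    linarith [hck, this.ge.trans_eq rfl, this.le]
  calc |Real.sin θ| / (Real.cosh (y/β) - Real.cos θ)
      ≤ (2*σ) / (y^2/(2*β^2) + 2*σ^2) := div_le_div₀ (by positivity) hsin hD' hDle
    _ = Hy β σ y := by
        unfold Hy
        rw [div_eq_div_iff (by positivity) (by nlinarith [sq_nonneg y, pow_pos hy 2])]
        field_simp
        ring

lemma Fk_abs_le {β v y : ℝ} (hβ0 : 0 < β) (hy : 0 < y) :
    |Fk β v y| ≤ Hy β |Real.sin ((π - v)/β/2)| y + Hy β |Real.sin ((π + v)/β/2)| y := by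
  have hC : 1 < Real.cosh (y/β) := Real.one_lt_cosh.2 (by positivity)
  have hd1 : 0 < Real.cosh (y/β) - Real.cos ((π - v)/β) := by
    have := Real.cos_le_one ((π - v)/β); linarith
  have hd2 : 0 < Real.cosh (y/β) - Real.cos ((π + v)/β) := by
    have := Real.cos_le_one ((π + v)/β); linarith
  rw [Fk_eq hβ0 hy, abs_neg]
  calc |Real.sin ((π - v)/β) / (Real.cosh (y/β) - Real.cos ((π - v)/β))
      + Real.sin ((π + v)/β) / (Real.cosh (y/β) - Real.cos ((π + v)/β))|
      ≤ |Real.sin ((π - v)/β)| / (Real.cosh (y/β) - Real.cos ((π - v)/β))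
        + |Real.sin ((π + v)/β)| / (Real.cosh (y/β) - Real.cos ((π + v)/β)) := by
        refine (abs_add_le _ _).trans ?_
        rw [abs_div, abs_div, abs_of_pos hd1, abs_of_pos hd2]
    _ ≤ _ := add_le_add (sin_div_le _ hβ0 hy) (sin_div_le _ hβ0 hy)

lemma Hy_le {β s y : ℝ} (hβ0 : 0 < β) (hs : 0 ≤ s) (hy : 0 < y) : Hy β s y ≤ β / y := by
  unfold Hy
  rw [div_le_div_iff₀ (by nlinarith [pow_pos hy 2]) hy]
  nlinarith [sq_nonneg (2*s*β - y), pow_pos hy 2]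

lemma Fk_abs_le' {β v y : ℝ} (hβ0 : 0 < β) (hy : 0 < y) :
    |Fk β v y| ≤ 2 / (Real.cosh (y/β) - 1) := by
  have hC : 1 < Real.cosh (y/β) := Real.one_lt_cosh.2 (by positivity)
  have hd1 : 0 < Real.cosh (y/β) - Real.cos ((π - v)/β) := by
    have := Real.cos_le_one ((π - v)/β); linarith
  have hd2 : 0 < Real.cosh (y/β) - Real.cos ((π + v)/β) := by
    have := Real.cos_le_one ((π + v)/β); linarith
  rw [Fk_eq hβ0 hy, abs_neg]
  have key : ∀ θ : ℝ, (0 < Real.cosh (y/β) - Real.cos θ) →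
      |Real.sin θ| / (Real.cosh (y/β) - Real.cos θ) ≤ 1 / (Real.cosh (y/β) - 1) := by
    intro θ hθ
    apply div_le_div₀ (by norm_num) (Real.abs_sin_le_one θ) (by linarith)
    have := Real.cos_le_one θ; linarith
  calc |Real.sin ((π - v)/β) / (Real.cosh (y/β) - Real.cos ((π - v)/β))
      + Real.sin ((π + v)/β) / (Real.cosh (y/β) - Real.cos ((π + v)/β))|
      ≤ |Real.sin ((π - v)/β)| / (Real.cosh (y/β) - Real.cos ((π - v)/β))
        + |Real.sin ((π + v)/β)| / (Real.cosh (y/β) - Real.cos ((π + v)/β)) := by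
        refine (abs_add_le _ _).trans ?_
        rw [abs_div, abs_div, abs_of_pos hd1, abs_of_pos hd2]
    _ ≤ 1 / (Real.cosh (y/β) - 1) + 1 / (Real.cosh (y/β) - 1) :=
        add_le_add (key _ hd1) (key _ hd2)
    _ = 2 / (Real.cosh (y/β) - 1) := by ring

lemma Fk_le_two_beta_div {β v y : ℝ} (hβ0 : 0 < β) (hy : 0 < y) :
    |Fk β v y| ≤ 2 * β / y := by
  refine (Fk_abs_le hβ0 hy).trans ?_
  have h1 := Hy_le (s := |Real.sin ((π - v)/β/2)|) hβ0 (abs_nonneg _) hy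
  have h2 := Hy_le (s := |Real.sin ((π + v)/β/2)|) hβ0 (abs_nonneg _) hy
  have : 2 * β / y = β / y + β / y := by ring
  rw [this]
  exact add_le_add h1 h2

lemma ck_mul_Fk_le {β v y : ℝ} (hβ0 : 0 < β) (hβ1 : β < 1) (hy : 0 < y) :
    ck y * |Fk β v y| ≤ (36 + 4 * β * Real.exp (1/β - 1)) * Real.exp (-(1/β - 1) * y) := by
  set δ := 1/β - 1 with hδdef
  have hδ : 0 < δ := by
    have : 1 < 1/β := by rw [lt_div_iff₀ hβ0]; linarith
    rw [hδdef]; linarith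
  have hexpδ : (0:ℝ) < Real.exp δ := Real.exp_pos _
  rcases le_or_gt y 1 with h1 | h1
  · have he2 : Real.exp (y/2) ≤ 2 := by
      have h4 : Real.exp (y/2) ^ 2 = Real.exp y := by
        rw [sq, ← Real.exp_add]; congr 1; ring
      have he : Real.exp y ≤ Real.exp 1 := Real.exp_le_exp.2 h1
      have he1 : Real.exp 1 < 2.7182818286 := Real.exp_one_lt_d9
      nlinarith [Real.exp_pos (y/2)]
    have hck : ck y ≤ 2 * y ^ 2 := by
      rw [ck_eq]
      have hs := sinh_le_mul_exp (u := y/2) (by linarith)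
      have hsn : 0 ≤ Real.sinh (y/2) := Real.sinh_nonneg_iff.2 (by linarith)
      have h5 := pow_le_pow_left₀ hsn hs 2
      have hE2 : Real.exp (y/2) ^ 2 ≤ 4 := by nlinarith [Real.exp_pos (y/2)]
      nlinarith [h5, hE2, hy.le, sq_nonneg y, Real.exp_pos (y/2)]
    have hF := Fk_le_two_beta_div (v := v) hβ0 hy
    have step1 : ck y * |Fk β v y| ≤ 2 * y ^ 2 * (2 * β / y) := by
      apply mul_le_mul hck hF (abs_nonneg _) (by positivity)
    have step2 : 2 * y ^ 2 * (2 * β / y) = 4 * β * y := by field_simp; ring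
    have step3 : 4 * β * y ≤ 4 * β := by nlinarith
    have step4 : 4 * β ≤ 4 * β * Real.exp δ * Real.exp (-δ * y) := by
      have : Real.exp δ * Real.exp (-δ * y) = Real.exp (δ - δ * y) := by
        rw [← Real.exp_add]; ring_nf
      rw [mul_assoc, this]
      have : (1:ℝ) ≤ Real.exp (δ - δ * y) := by
        rw [Real.one_le_exp_iff]; nlinarith
      nlinarith
    have hexpy : 0 ≤ Real.exp (-δ * y) := (Real.exp_pos _).le
    calc ck y * |Fk β v y| ≤ 4 * β * y := by linarith [step1, step2.le]
      _ ≤ 4 * β * Real.exp δ * Real.exp (-δ * y) := by linarith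
      _ ≤ (36 + 4 * β * Real.exp δ) * Real.exp (-δ * y) := by nlinarith
  · -- y > 1
    have hcky : ck y ≤ Real.exp y := by
      rw [ck, Real.cosh_eq]
      have : Real.exp (-y) ≤ Real.exp y := Real.exp_le_exp.2 (by linarith)
      linarith
    have hu : (1:ℝ)/2 ≤ y/(2*β) := by
      rw [div_le_div_iff₀ (by norm_num) (by positivity)]
      nlinarith
    have hsinh := exp_half_le_sinh hu
    have hsq : Real.exp (y/(2*β)) ^ 2 = Real.exp (y/β) := by
      rw [sq, ← Real.exp_add]; congr 1; field_simp; ring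
    have hccc : Real.exp (y/β) / 18 ≤ Real.cosh (y/β) - 1 := by
      have := ck_eq (y/β)
      rw [ck] at this
      have he : y/β/2 = y/(2*β) := by ring
      rw [this, he]
      nlinarith [Real.exp_pos (y/(2*β)), Real.exp_pos (y/β)]
    have hF : |Fk β v y| ≤ 36 * Real.exp (-(y/β)) := by
      refine (Fk_abs_le' hβ0 hy).trans ?_
      have h18 : (0:ℝ) < Real.exp (y/β) / 18 := by positivity
      calc (2:ℝ) / (Real.cosh (y/β) - 1) ≤ 2 / (Real.exp (y/β)/18) := by
            apply div_le_div_of_nonneg_left (by norm_num) h18 hccc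
        _ = 36 * Real.exp (-(y/β)) := by
            rw [Real.exp_neg]
            field_simp
            norm_num
    have step : ck y * |Fk β v y| ≤ Real.exp y * (36 * Real.exp (-(y/β))) := by
      apply mul_le_mul hcky hF (abs_nonneg _) (Real.exp_pos _).le
    have eq1 : Real.exp y * (36 * Real.exp (-(y/β))) = 36 * Real.exp (-δ * y) := by
      rw [mul_comm (Real.exp y), mul_assoc, ← Real.exp_add]
      congr 2
      have hb := hβ0.ne'
      rw [hδdef]
      field_simp
      ring
    rw [eq1] at step
    have hexpy : 0 ≤ 4 * β * Real.exp δ * Real.exp (-δ * y) := by positivity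
    nlinarith [step]

lemma pow_le_factorial_mul_exp {m : ℕ} {u : ℝ} (hu : 0 ≤ u) :
    u ^ m ≤ (m.factorial : ℝ) * Real.exp u := by
  have h1 : u ^ m / (m.factorial : ℝ) ≤ Real.exp u := by
    calc u ^ m / (m.factorial : ℝ)
        ≤ ∑ i ∈ Finset.range (m+1), u ^ i / (i.factorial : ℝ) :=
          Finset.single_le_sum (f := fun i => u ^ i / (i.factorial : ℝ))
            (fun i _ => by positivity) (Finset.self_mem_range_succ m)
      _ ≤ Real.exp u := Real.sum_le_exp_of_nonneg hu (m+1)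
  have hm : (0:ℝ) < (m.factorial : ℝ) := by positivity
  rw [div_le_iff₀ hm] at h1
  linarith [h1]

lemma pow_mul_exp_neg_le {m : ℕ} {u : ℝ} (hu : 0 ≤ u) :
    u ^ m * Real.exp (-u) ≤ (m.factorial : ℝ) := by
  have h1 := pow_le_factorial_mul_exp (m := m) hu
  have h2 : Real.exp u * Real.exp (-u) = 1 := by rw [← Real.exp_add]; simp
  have h3 : 0 < Real.exp (-u) := Real.exp_pos _
  nlinarith

lemma pow_mul_exp_neg_mul_le {m : ℕ} {a c : ℝ} (ha : 0 < a) (hc : 0 ≤ c) :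
    c ^ m * Real.exp (-(a * c)) ≤ (m.factorial : ℝ) * (2 / a) ^ m := by
  have h2 : c ^ m = (2/a) ^ m * (a*c/2) ^ m := by
    rw [← mul_pow]
    congr 1
    field_simp
  have h5 : (a*c/2) ^ m ≤ (m.factorial : ℝ) * Real.exp (a*c/2) :=
    pow_le_factorial_mul_exp (by positivity)
  have h6 : Real.exp (a*c/2) * Real.exp (-(a*c)) = Real.exp (-(a*c/2)) := by
    rw [← Real.exp_add]; congr 1; ring
  have h7 : Real.exp (-(a*c/2)) ≤ 1 := Real.exp_le_one_iff.2 (by nlinarith)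
  have h8 : (0:ℝ) ≤ (2/a) ^ m := by positivity
  have h9 : (0:ℝ) < Real.exp (-(a*c)) := Real.exp_pos _
  calc c ^ m * Real.exp (-(a*c)) = (2/a) ^ m * ((a*c/2) ^ m * Real.exp (-(a*c))) := by
        rw [h2]; ring
    _ ≤ (2/a) ^ m * ((m.factorial : ℝ) * Real.exp (a*c/2) * Real.exp (-(a*c))) := by
        apply mul_le_mul_of_nonneg_left _ h8
        have := mul_le_mul_of_nonneg_right h5 h9.le
        linarith [this]
    _ = (m.factorial : ℝ) * (2/a) ^ m * Real.exp (-(a*c/2)) := by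
        rw [mul_assoc ((m.factorial : ℝ)), h6]; ring
    _ ≤ (m.factorial : ℝ) * (2/a) ^ m * 1 := by
        apply mul_le_mul_of_nonneg_left h7 (by positivity)
    _ = (m.factorial : ℝ) * (2/a) ^ m := by ring

lemma Fk_contOn {β v : ℝ} (hβ0 : 0 < β) : ContinuousOn (Fk β v) (Ioi (0:ℝ)) := by
  unfold Fk
  apply ContinuousOn.div
  · apply Continuous.continuousOn
    exact continuous_const.mul (continuous_const.sub
      (continuous_const.mul (Real.continuous_cosh.comp (continuous_id.div_const β))))
  · apply Continuous.continuousOn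
    apply Continuous.mul
    · exact (Real.continuous_cosh.comp (continuous_id.div_const β)).sub continuous_const
    · exact (Real.continuous_cosh.comp (continuous_id.div_const β)).sub continuous_const
  · intro y hy
    have hC : 1 < Real.cosh (y/β) := Real.one_lt_cosh.2 (by have : (0:ℝ) < y := hy; positivity)
    have hd1 : 0 < Real.cosh (y/β) - Real.cos ((v - π)/β) := by
      have := Real.cos_le_one ((v - π)/β); linarith
    have hd2 : 0 < Real.cosh (y/β) - Real.cos ((v + π)/β) := by
      have := Real.cos_le_one ((v + π)/β); linarith
    positivity

noncomputable def Phi (β v y : ℝ) : ℝ :=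
  Hy β |Real.sin ((π - v)/β/2)| y + Hy β |Real.sin ((π + v)/β/2)| y

lemma Phi_int {β v : ℝ} (hβ0 : 0 < β) :
    IntegrableOn (Phi β v) (Ioi (0:ℝ)) ∧ ∫ y in Ioi (0:ℝ), Phi β v y ≤ 2 * β * π := by
  obtain ⟨i1, b1⟩ := Hy_integrable (s := |Real.sin ((π - v)/β/2)|) hβ0 (abs_nonneg _)
  obtain ⟨i2, b2⟩ := Hy_integrable (s := |Real.sin ((π + v)/β/2)|) hβ0 (abs_nonneg _)
  refine ⟨i1.add i2, ?_⟩
  unfold Phi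
  rw [integral_add i1 i2]
  linarith

lemma exp_ck_contOn {a : ℝ} : Continuous (fun y : ℝ => Real.exp (-(a * ck y))) := by
  apply Real.continuous_exp.comp
  apply Continuous.neg
  exact continuous_const.mul ((Real.continuous_cosh).sub continuous_const)

lemma J_integrable {β v : ℝ} (hβ0 : 0 < β) {a : ℝ} (ha : 0 ≤ a) :
    IntegrableOn (fun y => Real.exp (-(a * ck y)) * |Fk β v y|) (Ioi (0:ℝ)) := by
  obtain ⟨hPhi, _⟩ := Phi_int (v := v) hβ0
  apply Integrable.mono hPhi
  · exact (exp_ck_contOn.continuousOn.mul (Fk_contOn hβ0).abs).aestronglyMeasurable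
      measurableSet_Ioi
  · rw [ae_restrict_iff' measurableSet_Ioi]
    apply ae_of_all
    intro y hy
    have hy' : (0:ℝ) < y := hy
    have h1 : Real.exp (-(a * ck y)) ≤ 1 :=
      Real.exp_le_one_iff.2 (by nlinarith [ck_nonneg y])
    have h2 : |Fk β v y| ≤ Phi β v y := Fk_abs_le hβ0 hy'
    have h3 : 0 ≤ Phi β v y := by
      unfold Phi
      have := Hy_nonneg (s := |Real.sin ((π - v)/β/2)|) hβ0 (abs_nonneg _) y hy
      have := Hy_nonneg (s := |Real.sin ((π + v)/β/2)|) hβ0 (abs_nonneg _) y hy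
      linarith
    rw [Real.norm_eq_abs, Real.norm_eq_abs, abs_of_nonneg h3,
      abs_of_nonneg (by positivity : (0:ℝ) ≤ Real.exp (-(a * ck y)) * |Fk β v y|)]
    nlinarith [abs_nonneg (Fk β v y), Real.exp_pos (-(a * ck y))]

lemma ck_pow_integrable {β v : ℝ} (hβ0 : 0 < β) (k : ℕ) {z ζ₀ : ℝ} (hzζ : ζ₀ < z)
    (hJ : IntegrableOn (fun y => Real.exp (-(ζ₀ * ck y)) * |Fk β v y|) (Ioi (0:ℝ))) :
    IntegrableOn (fun y => ck y ^ k * Real.exp (-(z * ck y)) * Fk β v y) (Ioi (0:ℝ)) := by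
  set B : ℝ := (k.factorial : ℝ) * (2 / (z - ζ₀)) ^ k with hB
  apply Integrable.mono (hJ.const_mul B)
  · apply ContinuousOn.aestronglyMeasurable _ measurableSet_Ioi
    exact (((continuous_pow k).comp ((Real.continuous_cosh).sub continuous_const)).continuousOn.mul
      exp_ck_contOn.continuousOn).mul (Fk_contOn hβ0)
  · rw [ae_restrict_iff' measurableSet_Ioi]
    apply ae_of_all
    intro y hy
    have hck := ck_nonneg y
    have ha : 0 < z - ζ₀ := by linarith
    have key : ck y ^ k * Real.exp (-((z - ζ₀) * ck y)) ≤ B :=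
      pow_mul_exp_neg_mul_le ha hck
    have hsplit : Real.exp (-(z * ck y)) =
        Real.exp (-((z - ζ₀) * ck y)) * Real.exp (-(ζ₀ * ck y)) := by
      rw [← Real.exp_add]; congr 1; ring
    rw [Real.norm_eq_abs, Real.norm_eq_abs, abs_mul, abs_mul]
    have e1 : |ck y ^ k| = ck y ^ k := abs_of_nonneg (by positivity)
    have e2 : |Real.exp (-(z * ck y))| = Real.exp (-(z * ck y)) := abs_of_nonneg (by positivity)
    rw [e1, e2, hsplit]
    have hBpos : 0 < B := by rw [hB]; positivity
    have h4 : 0 ≤ Real.exp (-(ζ₀ * ck y)) * |Fk β v y| := by positivity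
    rw [abs_of_nonneg (by positivity : (0:ℝ) ≤ B * (Real.exp (-(ζ₀ * ck y)) * |Fk β v y|))]
    calc ck y ^ k * (Real.exp (-((z - ζ₀) * ck y)) * Real.exp (-(ζ₀ * ck y))) * |Fk β v y|
        = (ck y ^ k * Real.exp (-((z - ζ₀) * ck y))) * (Real.exp (-(ζ₀ * ck y)) * |Fk β v y|) := by
          ring
      _ ≤ B * (Real.exp (-(ζ₀ * ck y)) * |Fk β v y|) := mul_le_mul_of_nonneg_right key h4

lemma hk_hasDerivAt {β v : ℝ} (hβ0 : 0 < β) (k : ℕ) {z ζ₀ : ℝ} (hzζ : ζ₀ < z)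
    (hJ : IntegrableOn (fun y => Real.exp (-(ζ₀ * ck y)) * |Fk β v y|) (Ioi (0:ℝ))) :
    HasDerivAt (fun ζ => ∫ y in Ioi (0:ℝ), ck y ^ k * Real.exp (-(ζ * ck y)) * Fk β v y)
      (-∫ y in Ioi (0:ℝ), ck y ^ (k+1) * Real.exp (-(z * ck y)) * Fk β v y) z := by
  set ε : ℝ := (z - ζ₀)/2 with hε
  have hεpos : 0 < ε := by rw [hε]; linarith
  set B : ℝ := ((k+1).factorial : ℝ) * (2 / ε) ^ (k+1) with hB
  have meas : ∀ w : ℝ, AEStronglyMeasurable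
      (fun y => ck y ^ k * Real.exp (-(w * ck y)) * Fk β v y)
      (volume.restrict (Ioi (0:ℝ))) := by
    intro w
    apply ContinuousOn.aestronglyMeasurable _ measurableSet_Ioi
    exact (((continuous_pow k).comp ((Real.continuous_cosh).sub continuous_const)).continuousOn.mul
      exp_ck_contOn.continuousOn).mul (Fk_contOn hβ0)
  have meas' : AEStronglyMeasurable
      (fun y => -(ck y ^ (k+1) * Real.exp (-(z * ck y)) * Fk β v y))
      (volume.restrict (Ioi (0:ℝ))) := by
    apply AEStronglyMeasurable.neg
    apply ContinuousOn.aestronglyMeasurable _ measurableSet_Ioi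
    exact (((continuous_pow (k+1)).comp ((Real.continuous_cosh).sub continuous_const)).continuousOn.mul
      exp_ck_contOn.continuousOn).mul (Fk_contOn hβ0)
  have hint : Integrable (fun y => ck y ^ k * Real.exp (-(z * ck y)) * Fk β v y)
      (volume.restrict (Ioi (0:ℝ))) := ck_pow_integrable hβ0 k hzζ hJ
  have key := hasDerivAt_integral_of_dominated_loc_of_deriv_le (μ := volume.restrict (Ioi (0:ℝ)))
    (F := fun ζ y => ck y ^ k * Real.exp (-(ζ * ck y)) * Fk β v y)
    (F' := fun ζ y => -(ck y ^ (k+1) * Real.exp (-(ζ * ck y)) * Fk β v y))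
    (x₀ := z)
    (bound := fun y => B * (Real.exp (-(ζ₀ * ck y)) * |Fk β v y|))
    (ball_mem_nhds z hεpos) (Filter.Eventually.of_forall (fun w => meas w)) hint meas' ?_ (hJ.const_mul B) ?_
  · obtain ⟨-, hd⟩ := key
    refine hd.congr_deriv ?_
    rw [integral_neg]
  · -- bound
    rw [ae_restrict_iff' measurableSet_Ioi]
    apply ae_of_all
    intro y hy ζ hζ
    have hck := ck_nonneg y
    have hζgt : ζ₀ + ε < ζ := by
      have := abs_lt.1 (mem_ball_iff_norm.1 hζ)
      rw [hε]
      rw [hε] at hεpos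
      linarith [this.1]
    have hsplit : Real.exp (-(ζ * ck y)) ≤ Real.exp (-(ε * ck y)) * Real.exp (-(ζ₀ * ck y)) := by
      rw [← Real.exp_add]
      apply Real.exp_le_exp.2
      nlinarith
    have hkey : ck y ^ (k+1) * Real.exp (-(ε * ck y)) ≤ B := pow_mul_exp_neg_mul_le hεpos hck
    rw [norm_neg, Real.norm_eq_abs, abs_mul, abs_mul]
    have e1 : |ck y ^ (k+1)| = ck y ^ (k+1) := abs_of_nonneg (by positivity)
    have e2 : |Real.exp (-(ζ * ck y))| = Real.exp (-(ζ * ck y)) := abs_of_nonneg (by positivity)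
    rw [e1, e2]
    calc ck y ^ (k+1) * Real.exp (-(ζ * ck y)) * |Fk β v y|
        ≤ ck y ^ (k+1) * (Real.exp (-(ε * ck y)) * Real.exp (-(ζ₀ * ck y))) * |Fk β v y| := by
          apply mul_le_mul_of_nonneg_right _ (abs_nonneg _)
          exact mul_le_mul_of_nonneg_left hsplit (by positivity)
      _ = (ck y ^ (k+1) * Real.exp (-(ε * ck y))) * (Real.exp (-(ζ₀ * ck y)) * |Fk β v y|) := by
          ring
      _ ≤ B * (Real.exp (-(ζ₀ * ck y)) * |Fk β v y|) :=
          mul_le_mul_of_nonneg_right hkey (by positivity)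
  · -- differentiability
    apply ae_of_all
    intro y ζ hζ
    have h1 : HasDerivAt (fun w : ℝ => -(w * ck y)) (-(ck y)) ζ :=
      (hasDerivAt_mul_const (ck y)).neg
    have h2 := h1.exp
    have h3 := (h2.const_mul (ck y ^ k)).mul_const (Fk β v y)
    refine h3.congr_deriv ?_
    ring

lemma integral_exp_neg_mul {δ : ℝ} (hδ : 0 < δ) :
    ∫ y in Ioi (0:ℝ), Real.exp (-δ * y) = 1/δ := by
  have hderiv : ∀ y ∈ Ioi (0:ℝ), HasDerivAt (fun y => -(1/δ) * Real.exp (-δ * y))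
      (Real.exp (-δ * y)) y := by
    intro y _
    have h1 : HasDerivAt (fun y : ℝ => -δ * y) (-δ) y := by
      simpa using (hasDerivAt_id y).const_mul (-δ)
    have h2 := (h1.exp).const_mul (-(1/δ))
    refine h2.congr_deriv ?_
    field_simp
  have hcont : ContinuousWithinAt (fun y => -(1/δ) * Real.exp (-δ * y)) (Ici (0:ℝ)) 0 := by
    apply Continuous.continuousWithinAt
    exact continuous_const.mul (Real.continuous_exp.comp (continuous_const.mul continuous_id))
  have htend : Tendsto (fun y => -(1/δ) * Real.exp (-δ * y)) atTop (𝓝 0) := by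
    have h1 : Tendsto (fun y : ℝ => -δ * y) atTop atBot :=
      tendsto_id.const_mul_atTop_of_neg (by linarith)
    have h2 := Real.tendsto_exp_atBot.comp h1
    have := h2.const_mul (-(1/δ))
    simpa using this
  have := integral_Ioi_of_hasDerivAt_of_nonneg hcont hderiv
    (fun y _ => (Real.exp_pos _).le) htend
  rw [this]
  simp

lemma integral_ck_bound {β v : ℝ} (hβ0 : 0 < β) (hβ1 : β < 1) (m : ℕ) (hm : 1 ≤ m)
    {z : ℝ} (hz : 0 ≤ z)
    (hint : IntegrableOn (fun y => ck y ^ m * Real.exp (-(z * ck y)) * Fk β v y) (Ioi (0:ℝ))) :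
    z ^ (m-1) * |∫ y in Ioi (0:ℝ), ck y ^ m * Real.exp (-(z * ck y)) * Fk β v y|
      ≤ ((m-1).factorial : ℝ) * ((36 + 4*β*Real.exp (1/β - 1)) / (1/β - 1)) := by
  set δ : ℝ := 1/β - 1 with hδdef
  set K : ℝ := 36 + 4*β*Real.exp (1/β - 1) with hK
  have hδ : 0 < δ := by
    have : 1 < 1/β := by rw [lt_div_iff₀ hβ0]; linarith
    rw [hδdef]; linarith
  have hKpos : 0 < K := by rw [hK]; positivity
  have hzp : 0 ≤ z ^ (m-1) := by positivity
  have step1 : |∫ y in Ioi (0:ℝ), ck y ^ m * Real.exp (-(z * ck y)) * Fk β v y|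
      ≤ ∫ y in Ioi (0:ℝ), ‖ck y ^ m * Real.exp (-(z * ck y)) * Fk β v y‖ := by
    rw [← Real.norm_eq_abs]
    exact norm_integral_le_integral_norm _
  have hRint : IntegrableOn (fun y => ((m-1).factorial : ℝ) * (K * Real.exp (-δ * y)))
      (Ioi (0:ℝ)) := (((exp_neg_integrableOn_Ioi 0 hδ).const_mul K).const_mul _)
  have step2 : ∫ y in Ioi (0:ℝ), z ^ (m-1) * ‖ck y ^ m * Real.exp (-(z * ck y)) * Fk β v y‖
      ≤ ∫ y in Ioi (0:ℝ), ((m-1).factorial : ℝ) * (K * Real.exp (-δ * y)) := by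
    apply setIntegral_mono_on (hint.norm.const_mul _) hRint measurableSet_Ioi
    intro y hy
    have hy' : (0:ℝ) < y := hy
    have hck := ck_nonneg y
    have e1 : ‖ck y ^ m * Real.exp (-(z * ck y)) * Fk β v y‖
        = ck y ^ m * Real.exp (-(z * ck y)) * |Fk β v y| := by
      rw [Real.norm_eq_abs, abs_mul, abs_mul, abs_of_nonneg (by positivity : (0:ℝ) ≤ ck y ^ m),
        abs_of_nonneg (Real.exp_pos _).le]
    rw [e1]
    have hmm : m = (m - 1) + 1 := (Nat.succ_pred_eq_of_pos hm).symm
    have e2 : z ^ (m-1) * (ck y ^ m * Real.exp (-(z * ck y)) * |Fk β v y|)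
        = ((z * ck y) ^ (m-1) * Real.exp (-(z * ck y))) * (ck y * |Fk β v y|) := by
      have epow : ck y ^ m = ck y ^ (m-1) * ck y := by rw [← pow_succ, ← hmm]
      rw [mul_pow, epow]
      ring
    rw [e2]
    have h3 : (z * ck y) ^ (m-1) * Real.exp (-(z * ck y)) ≤ ((m-1).factorial : ℝ) :=
      pow_mul_exp_neg_le (by positivity)
    have h4 : ck y * |Fk β v y| ≤ K * Real.exp (-δ * y) := ck_mul_Fk_le hβ0 hβ1 hy'
    have h5 : 0 ≤ ck y * |Fk β v y| := mul_nonneg hck (abs_nonneg _)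
    have h6 : 0 ≤ (z * ck y) ^ (m-1) * Real.exp (-(z * ck y)) := by positivity
    calc (z * ck y) ^ (m-1) * Real.exp (-(z * ck y)) * (ck y * |Fk β v y|)
        ≤ ((m-1).factorial : ℝ) * (ck y * |Fk β v y|) := mul_le_mul_of_nonneg_right h3 h5
      _ ≤ ((m-1).factorial : ℝ) * (K * Real.exp (-δ * y)) := by
          apply mul_le_mul_of_nonneg_left h4 (by positivity)
  have step3 : ∫ y in Ioi (0:ℝ), ((m-1).factorial : ℝ) * (K * Real.exp (-δ * y))
      = ((m-1).factorial : ℝ) * (K / δ) := by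
    rw [MeasureTheory.integral_const_mul, MeasureTheory.integral_const_mul, integral_exp_neg_mul hδ]
    field_simp
  calc z ^ (m-1) * |∫ y in Ioi (0:ℝ), ck y ^ m * Real.exp (-(z * ck y)) * Fk β v y|
      ≤ z ^ (m-1) * ∫ y in Ioi (0:ℝ), ‖ck y ^ m * Real.exp (-(z * ck y)) * Fk β v y‖ :=
        mul_le_mul_of_nonneg_left step1 hzp
    _ = ∫ y in Ioi (0:ℝ), z ^ (m-1) * ‖ck y ^ m * Real.exp (-(z * ck y)) * Fk β v y‖ := by
        rw [MeasureTheory.integral_const_mul]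
    _ ≤ ∫ y in Ioi (0:ℝ), ((m-1).factorial : ℝ) * (K * Real.exp (-δ * y)) := step2
    _ = ((m-1).factorial : ℝ) * (K / δ) := step3

lemma g_eq_h (β v ζ : ℝ) :
    Real.exp ζ * Efun β ζ v
      = ∫ y in Ioi (0:ℝ), ck y ^ (0:ℕ) * Real.exp (-(ζ * ck y)) * Fk β v y := by
  unfold Efun
  rw [← MeasureTheory.integral_const_mul]
  congr 1
  funext y
  rw [Fk, ck, mul_div_assoc, ← mul_assoc, ← Real.exp_add, pow_zero, one_mul]
  congr 2
  ring

lemma iteratedDeriv_h {β v : ℝ} (hβ0 : 0 < β) (n : ℕ) :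
    ∀ z : ℝ, 0 < z →
    iteratedDeriv n (fun ζ => ∫ y in Ioi (0:ℝ), ck y ^ (0:ℕ) * Real.exp (-(ζ * ck y)) * Fk β v y) z
      = (-1)^n * ∫ y in Ioi (0:ℝ), ck y ^ n * Real.exp (-(z * ck y)) * Fk β v y := by
  induction n with
  | zero => intro z hz; simp
  | succ n ih =>
    intro z hz
    rw [iteratedDeriv_succ]
    have hEv : (iteratedDeriv n
          (fun ζ => ∫ y in Ioi (0:ℝ), ck y ^ (0:ℕ) * Real.exp (-(ζ * ck y)) * Fk β v y))
        =ᶠ[𝓝 z] (fun w => (-1)^n * ∫ y in Ioi (0:ℝ), ck y ^ n * Real.exp (-(w * ck y)) * Fk β v y) := by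
      filter_upwards [Ioi_mem_nhds hz] with w hw
      exact ih w hw
    rw [hEv.deriv_eq]
    have hJ : IntegrableOn (fun y => Real.exp (-(z/2 * ck y)) * |Fk β v y|) (Ioi (0:ℝ)) :=
      J_integrable hβ0 (by positivity)
    have hd := hk_hasDerivAt hβ0 n (show z/2 < z by linarith) hJ
    rw [deriv_const_mul _ hd.differentiableAt, hd.deriv]
    rw [pow_succ]
    ring

lemma deriv_g_zero {β v : ℝ}
    (hneg : ∀ x : ℝ, x < 0 → Real.exp x * Efun β x v = 0) :
    deriv (fun ζ => Real.exp ζ * Efun β ζ v) 0 = 0 := by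
  set g := fun ζ => Real.exp ζ * Efun β ζ v with hg
  by_cases hdiff : DifferentiableAt ℝ g 0
  · have hder : HasDerivAt g (deriv g 0) 0 := hdiff.hasDerivAt
    have hev : g =ᶠ[𝓝[<] (0:ℝ)] (fun _ => 0) := by
      apply eventually_nhdsWithin_of_forall
      intro x hx
      exact hneg x hx
    have h0 : g 0 = 0 := by
      have t1 : Tendsto g (𝓝[<] (0:ℝ)) (𝓝 (g 0)) :=
        (hder.continuousAt.continuousWithinAt).tendsto
      have t2 : Tendsto g (𝓝[<] (0:ℝ)) (𝓝 0) :=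
        Tendsto.congr' hev.symm tendsto_const_nhds
      exact tendsto_nhds_unique t1 t2
    have hslope := hasDerivAt_iff_tendsto_slope.1 hder
    have hsub : Iio (0:ℝ) ⊆ {(0:ℝ)}ᶜ := fun x hx => ne_of_lt hx
    have hslope' : Tendsto (slope g 0) (𝓝[<] (0:ℝ)) (𝓝 (deriv g 0)) :=
      hslope.mono_left (nhdsWithin_mono 0 hsub)
    have hz : slope g 0 =ᶠ[𝓝[<] (0:ℝ)] (fun _ => 0) := by
      filter_upwards [hev] with x hx
      rw [slope_def_field, hx, h0]
      simp
    have hz' : Tendsto (slope g 0) (𝓝[<] (0:ℝ)) (𝓝 0) :=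
      Tendsto.congr' hz.symm tendsto_const_nhds
    exact tendsto_nhds_unique hslope' hz'
  · exact deriv_zero_of_not_differentiableAt hdiff

end EfunAux

open Set Filter Metric Topology in
/-- For each `n ≥ 1` there is `C_n` with `|z^{n−1} (dⁿ/dzⁿ)(e^z E(z,v))| ≤ C_n`, and there
is `C` with `|e^z E(z,v)| ≤ C`, for all `z ≥ 0` and `v ≢ ±π (mod 2βπ)`. -/
theorem Efun_ez_z_derivative_bounds (β : ℝ) (hβ0 : 0 < β) (hβ1 : β < 1) :
    (∀ n : ℕ, 1 ≤ n →
      ∃ C > 0, ∀ z : ℝ, 0 ≤ z → ∀ v : ℝ,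
        (∀ k : ℤ, v + 2 * (k : ℝ) * β * π ≠ π ∧ v + 2 * (k : ℝ) * β * π ≠ -π) →
        |z ^ (n - 1) * iteratedDeriv n (fun ζ => Real.exp ζ * Efun β ζ v) z| ≤ C) ∧
    (∃ C > 0, ∀ z : ℝ, 0 ≤ z → ∀ v : ℝ,
      (∀ k : ℤ, v + 2 * (k : ℝ) * β * π ≠ π ∧ v + 2 * (k : ℝ) * β * π ≠ -π) →
      |Real.exp z * Efun β z v| ≤ C) := by
  have hδ : 0 < 1/β - 1 := by
    have : 1 < 1/β := by rw [lt_div_iff₀ hβ0]; linarith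
    linarith
  constructor
  · intro n hn
    set δ : ℝ := 1/β - 1 with hδdef
    set K : ℝ := 36 + 4*β*Real.exp (1/β - 1) with hK
    have hKpos : 0 < K := by rw [hK]; positivity
    have hCpos : (0:ℝ) < ((n-1).factorial : ℝ) * (K/δ) + 1 := by positivity
    refine ⟨((n-1).factorial : ℝ) * (K/δ) + 1, hCpos, ?_⟩
    intro z hz v _
    rcases eq_or_lt_of_le hz with rfl | hzpos
    · -- z = 0
      rcases Nat.lt_or_ge n 2 with h2 | h2
      · -- n = 1
        have hn1 : n = 1 := by omega
        subst hn1
        rw [iteratedDeriv_one]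
        rw [show ((0:ℝ) ^ (1-1:ℕ)) = 1 by norm_num, one_mul]
        by_cases hcase : ∃ ζ : ℝ, ζ < 0 ∧
            IntegrableOn (fun y => Real.exp (-(ζ * ck y)) * Fk β v y) (Ioi (0:ℝ))
        · obtain ⟨ζ₀, hζ0, hJ'⟩ := hcase
          have hJ : IntegrableOn (fun y => Real.exp (-(ζ₀ * ck y)) * |Fk β v y|)
              (Ioi (0:ℝ)) := by
            have h := hJ'.abs
            have e : (fun y => |Real.exp (-(ζ₀ * ck y)) * Fk β v y|)
                = fun y => Real.exp (-(ζ₀ * ck y)) * |Fk β v y| := by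
              funext y
              rw [abs_mul, abs_of_nonneg (Real.exp_pos _).le]
            rwa [e] at h
          have hgh : (fun ζ => Real.exp ζ * Efun β ζ v)
              = fun ζ => ∫ y in Ioi (0:ℝ), ck y ^ (0:ℕ) * Real.exp (-(ζ * ck y)) * Fk β v y :=
            funext (g_eq_h β v)
          have hd := hk_hasDerivAt hβ0 0 hζ0 hJ
          rw [hgh, hd.deriv]
          have hint1 : IntegrableOn
              (fun y => ck y ^ (1:ℕ) * Real.exp (-((0:ℝ) * ck y)) * Fk β v y) (Ioi (0:ℝ)) :=
            ck_pow_integrable hβ0 1 hζ0 hJ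
          have hb := integral_ck_bound (v := v) hβ0 hβ1 1 le_rfl (le_refl (0:ℝ)) hint1
          rw [show ((0:ℝ) ^ (1-1:ℕ)) = 1 by norm_num, one_mul] at hb
          rw [abs_neg]
          simp only [zero_add]
          linarith [hb]
        · push_neg at hcase
          have hneg : ∀ x : ℝ, x < 0 → Real.exp x * Efun β x v = 0 := by
            intro x hx
            have hE : Efun β x v = 0 := by
              unfold Efun
              apply integral_undef
              intro hcon
              apply hcase x hx
              have h2 := hcon.const_mul (Real.exp x)
              have e : (fun y => Real.exp x * (Real.exp (-x * Real.cosh y) *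
                  (2 * Real.sin (π / β) * (Real.cos (π / β) - Real.cos (v / β) * Real.cosh (y / β))) /
                  ((Real.cosh (y / β) - Real.cos ((v - π) / β)) *
                    (Real.cosh (y / β) - Real.cos ((v + π) / β)))))
                  = fun y => Real.exp (-(x * ck y)) * Fk β v y := by
                funext y
                rw [Fk, ck, mul_div_assoc, ← mul_assoc, ← Real.exp_add]
                congr 2
                ring
              rwa [e] at h2
            rw [hE, mul_zero]
          rw [deriv_g_zero hneg]
          norm_num
          positivity
      · -- n ≥ 2
        rw [zero_pow (by omega : n - 1 ≠ 0), zero_mul, abs_zero]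
        positivity
    · -- z > 0
      have hgh : (fun ζ => Real.exp ζ * Efun β ζ v)
          = fun ζ => ∫ y in Ioi (0:ℝ), ck y ^ (0:ℕ) * Real.exp (-(ζ * ck y)) * Fk β v y :=
        funext (g_eq_h β v)
      rw [hgh, iteratedDeriv_h hβ0 n z hzpos]
      have hJ : IntegrableOn (fun y => Real.exp (-(z/2 * ck y)) * |Fk β v y|) (Ioi (0:ℝ)) :=
        J_integrable hβ0 (by positivity)
      have hint := ck_pow_integrable hβ0 n (show z/2 < z by linarith) hJ
      have hb := integral_ck_bound (v := v) hβ0 hβ1 n hn hz hint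
      calc |z ^ (n-1) * ((-1)^n * ∫ y in Ioi (0:ℝ), ck y ^ n * Real.exp (-(z * ck y)) * Fk β v y)|
          = z ^ (n-1) * |∫ y in Ioi (0:ℝ), ck y ^ n * Real.exp (-(z * ck y)) * Fk β v y| := by
            rw [abs_mul, abs_mul, abs_pow, abs_pow, abs_neg, abs_one, one_pow, one_mul,
              abs_of_nonneg hz]
        _ ≤ ((n-1).factorial : ℝ) * (K/δ) := hb
        _ ≤ ((n-1).factorial : ℝ) * (K/δ) + 1 := by linarith
  · -- part 2
    have hπ := Real.pi_pos
    refine ⟨2*β*π + 1, by positivity, ?_⟩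
    intro z hz v _
    rw [g_eq_h β v z]
    obtain ⟨hPhi, hPhiB⟩ := Phi_int (v := v) hβ0
    have hbd : ‖∫ y in Ioi (0:ℝ), ck y ^ (0:ℕ) * Real.exp (-(z * ck y)) * Fk β v y‖
        ≤ ∫ y in Ioi (0:ℝ), Phi β v y := by
      apply norm_integral_le_of_norm_le hPhi
      rw [ae_restrict_iff' measurableSet_Ioi]
      apply ae_of_all
      intro y hy
      have hy' : (0:ℝ) < y := hy
      rw [Real.norm_eq_abs, pow_zero, one_mul, abs_mul, abs_of_nonneg (Real.exp_pos _).le]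
      have h1 : Real.exp (-(z * ck y)) ≤ 1 :=
        Real.exp_le_one_iff.2 (by nlinarith [ck_nonneg y])
      have h2 : |Fk β v y| ≤ Phi β v y := Fk_abs_le (v := v) hβ0 hy'
      nlinarith [abs_nonneg (Fk β v y), Real.exp_pos (-(z * ck y))]
    rw [← Real.norm_eq_abs]
    linarith
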